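/- The burning number of the path P_n on n vertices equals ⌈√n⌉. -/

import Mathlib

open SimpleGraph
open scoped Classical

/-- Burning number: least `k` such that there are fire sources `v₀,…,v_{k-1}` with
`⋃_{r=0}^{k-1} B_r(v_r) = V`. -/
noncomputable def burningNumber (V : Type*) [Fintype V] (G : SimpleGraph V) : ℕ :=
  sInf {k | ∃ v : Fin k → V, ∀ u : V, ∃ r : Fin k, G.dist (v r) u ≤ (r : ℕ)}

/-- Covering number `b̂`: least `k` such that `k` balls of radius `k` cover `V`. -/
noncomputable def coverNumber (V : Type*) [Fintype V] (G : SimpleGraph V) : ℕ :=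
  sInf {k | ∃ v : Fin k → V, ∀ u : V, ∃ i : Fin k, G.dist (v i) u ≤ k}

private lemma exists_walk_of_add {n : ℕ} :
    ∀ d (i j : Fin n), i.val + d = j.val → ∃ w : (SimpleGraph.pathGraph n).Walk i j, w.length = d := by
  intro d
  induction d with
  | zero =>
    intro i j h
    have : i = j := Fin.ext (by omega)
    subst this
    exact ⟨SimpleGraph.Walk.nil, rfl⟩
  | succ d ih =>
    intro i j h
    have hi1 : i.val + 1 < n := by have := j.isLt; omega
    set i' : Fin n := ⟨i.val + 1, hi1⟩ with hi'
    have hadj : (SimpleGraph.pathGraph n).Adj i i' := by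
      rw [SimpleGraph.pathGraph_adj]; left; rfl
    obtain ⟨w, hw⟩ := ih i' j (by simp [hi']; omega)
    exact ⟨SimpleGraph.Walk.cons hadj w, by simp [hw]⟩

private lemma nat_dist_le_length {n : ℕ} {i j : Fin n}
    (w : (SimpleGraph.pathGraph n).Walk i j) : Nat.dist i.val j.val ≤ w.length := by
  induction w with
  | nil => simp [Nat.dist]
  | @cons a b c hadj p ih =>
    rw [SimpleGraph.pathGraph_adj] at hadj
    have : Nat.dist a.val c.val ≤ Nat.dist a.val b.val + Nat.dist b.val c.val :=
      Nat.dist.triangle_inequality _ _ _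
    have hab : Nat.dist a.val b.val = 1 := by
      rcases hadj with h | h <;> simp [Nat.dist] <;> omega
    simp only [SimpleGraph.Walk.length_cons]
    omega

private lemma pathGraph_dist {n : ℕ} (i j : Fin n) :
    (SimpleGraph.pathGraph n).dist i j = Nat.dist i.val j.val := by
  apply le_antisymm
  · rcases le_total i.val j.val with h | h
    · obtain ⟨w, hw⟩ := exists_walk_of_add (j.val - i.val) i j (by omega)
      have := SimpleGraph.dist_le w
      have : Nat.dist i.val j.val = j.val - i.val := by simp [Nat.dist]; omega
      omega
    · obtain ⟨w, hw⟩ := exists_walk_of_add (i.val - j.val) j i (by omega)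
      have h1 := SimpleGraph.dist_le w.reverse
      simp [hw] at h1
      have : Nat.dist i.val j.val = i.val - j.val := by simp [Nat.dist]; omega
      omega
  · have hn : n = (n - 1) + 1 := by have := i.isLt; omega
    have hconn : (SimpleGraph.pathGraph n).Connected := by
      rw [hn]; exact SimpleGraph.pathGraph_connected _
    obtain ⟨w, hw⟩ := hconn.exists_walk_length_eq_dist i j
    calc Nat.dist i.val j.val ≤ w.length := nat_dist_le_length w
    _ = _ := hw

private lemma ball_card_le {n : ℕ} (c : Fin n) (r : ℕ) :
    (Finset.univ.filter (fun u : Fin n => Nat.dist c.val u.val ≤ r)).card ≤ 2 * r + 1 := by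
  have : (Finset.univ.filter (fun u : Fin n => Nat.dist c.val u.val ≤ r)).card
      ≤ (Finset.range (2 * r + 1)).card := by
    apply Finset.card_le_card_of_injOn (fun u => u.val + r - c.val)
    · intro u hu
      rw [Finset.mem_coe, Finset.mem_filter] at hu
      simp only [Finset.mem_filter, Nat.dist] at hu
      have := hu.2
      simp [Finset.mem_range]; omega
    · intro u hu v hv huv
      rw [Finset.mem_coe, Finset.mem_filter] at hu hv
      simp only [Finset.coe_filter, Set.mem_setOf_eq, Nat.dist] at hu hv
      have hu' := hu.2; have hv' := hv.2
      dsimp only at huv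
      exact Fin.ext (by omega)
  simpa using this

private lemma sum_odd (k : ℕ) : ∑ r ∈ Finset.range k, (2 * r + 1) = k * k := by
  induction k with
  | zero => simp
  | succ k ih => rw [Finset.sum_range_succ, ih]; ring

private lemma le_sq_of_mem {n k : ℕ}
    (h : ∃ v : Fin k → Fin n, ∀ u : Fin n, ∃ r : Fin k,
      (SimpleGraph.pathGraph n).dist (v r) u ≤ (r : ℕ)) : n ≤ k * k := by
  obtain ⟨v, hv⟩ := h
  have hcov : (Finset.univ : Finset (Fin n)) ⊆
      Finset.univ.biUnion (fun r : Fin k =>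
        Finset.univ.filter (fun u : Fin n => Nat.dist (v r).val u.val ≤ (r : ℕ))) := by
    intro u _
    obtain ⟨r, hr⟩ := hv u
    rw [pathGraph_dist] at hr
    exact Finset.mem_biUnion.2 ⟨r, Finset.mem_univ _, Finset.mem_filter.2 ⟨Finset.mem_univ _, hr⟩⟩
  have h1 : n ≤ ∑ r : Fin k, (2 * (r : ℕ) + 1) := by
    calc n = (Finset.univ : Finset (Fin n)).card := by simp
    _ ≤ _ := (Finset.card_le_card hcov).trans <|
      (Finset.card_biUnion_le).trans (Finset.sum_le_sum fun r _ => ball_card_le (v r) (r : ℕ))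
  have h2 : ∑ r : Fin k, (2 * (r : ℕ) + 1) = k * k := by
    rw [Fin.sum_univ_eq_sum_range (fun r => 2 * r + 1) k]; exact sum_odd k
  omega

theorem burning_path (n : ℕ) (hn : 1 ≤ n) :
    burningNumber (Fin n) (SimpleGraph.pathGraph n) = ⌈Real.sqrt n⌉₊ := by
  set k₀ := ⌈Real.sqrt n⌉₊ with hk₀
  have hnk : n ≤ k₀ * k₀ := by
    have h1 : Real.sqrt n ≤ (k₀ : ℝ) := Nat.le_ceil _
    have h2 : (n : ℝ) ≤ (k₀ : ℝ) * (k₀ : ℝ) := by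
      have := Real.sq_sqrt (by positivity : (0:ℝ) ≤ (n:ℝ))
      nlinarith [Real.sqrt_nonneg (n : ℝ)]
    exact_mod_cast h2
  have hceil_le : ∀ k : ℕ, n ≤ k * k → k₀ ≤ k := by
    intro k hk
    rw [hk₀]
    apply Nat.ceil_le.2
    have : Real.sqrt n ≤ Real.sqrt ((k : ℝ) * k) := Real.sqrt_le_sqrt (by exact_mod_cast hk)
    rwa [Real.sqrt_mul_self (by positivity)] at this
  -- membership of k₀
  have hmem : k₀ ∈ {k | ∃ v : Fin k → Fin n, ∀ u : Fin n, ∃ r : Fin k,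
      (SimpleGraph.pathGraph n).dist (v r) u ≤ (r : ℕ)} := by
    refine ⟨fun r => ⟨min (n - 1) ((r : ℕ) * r + r), by omega⟩, fun u => ?_⟩
    set r := Nat.sqrt u.val with hr
    have hrk : r < k₀ := by
      rw [hr]
      have : u.val < k₀ ^ 2 := by have := u.isLt; nlinarith [sq_nonneg k₀]
      exact Nat.sqrt_lt'.2 this
    refine ⟨⟨r, hrk⟩, ?_⟩
    rw [pathGraph_dist]
    have h1 : r * r ≤ u.val := by
      have := Nat.sqrt_le' u.val; simpa [pow_two] using this
    have h2 : u.val < r * r + 2 * r + 1 := by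
      calc u.val < (r + 1) ^ 2 := Nat.lt_succ_sqrt' u.val
      _ = r * r + 2 * r + 1 := by ring
    have hu := u.isLt
    simp only [Nat.dist, Fin.val_mk]
    omega
  apply le_antisymm
  · exact Nat.sInf_le hmem
  · have hne : {k | ∃ v : Fin k → Fin n, ∀ u : Fin n, ∃ r : Fin k,
        (SimpleGraph.pathGraph n).dist (v r) u ≤ (r : ℕ)}.Nonempty := ⟨k₀, hmem⟩
    have hm := Nat.sInf_mem hne
    exact hceil_le _ (le_sq_of_mem hm)
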